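/- Consistency of the least-squares estimator (first part of Theorem 2 on estimation): Assume the model satisfies Assumption 1, Assumption 2, and Condition 1, and set θ := (π₁₍₀₎, π₁₍₁₎) where π₁₍ₐ₎ = P(Y¹=1 | Y⁰=a). Let (Gᵢ, Aᵢ, Yᵢ), i ∈ ℕ, be an i.i.d. sequence with the law of (G, A, Y) under μ, defined on some probability space. For n ∈ ℕ and g ∈ Fin m define the empirical frequencies Ŷ_g(n) := #{i < n : Yᵢ=1, Gᵢ=g, Aᵢ=1} / #{i < n : Gᵢ=g, Aᵢ=1} and X̂_g(n) := ( #{i < n : Yᵢ=0, Gᵢ=g, Aᵢ=0} / #{i < n : Gᵢ=g, Aᵢ=0}, #{i < n : Yᵢ=1, Gᵢ=g, Aᵢ=0} / #{i < n : Gᵢ=g, Aᵢ=0} ) ∈ ℝ² (each ratio set to 0 when its denominator is 0), and the estimator θ̂ₙ := (Σ_{g} X̂_g(n) X̂_g(n)ᵀ)⁻¹ · Σ_{g} X̂_g(n) Ŷ_g(n), where the inverse is taken to be 0 when the 2×2 matrix is singular. Then almost surely θ̂ₙ → θ as n → ∞. -/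

import Mathlib

open MeasureTheory ProbabilityTheory Filter Matrix Topology

/-- Conditional probability `P(E | F) = μ(E ∩ F) / μ(F)` as a real number. -/
noncomputable def condP {Ω : Type*} [MeasurableSpace Ω] (μ : Measure Ω) (E F : Set Ω) : ℝ :=
  (μ (E ∩ F)).toReal / (μ F).toReal

lemma freq_tendsto {Ω₂ : Type*} [MeasurableSpace Ω₂] {ν : Measure Ω₂}
    [IsProbabilityMeasure ν]
    {S : Type*} [MeasurableSpace S] [Countable S] [MeasurableSingletonClass S]
    (Z : ℕ → Ω₂ → S) (hZmeas : ∀ i, Measurable (Z i))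
    (hZindep : iIndepFun Z ν)
    (hZdist : ∀ i, ν.map (Z i) = ν.map (Z 0))
    (p : S → Prop) [DecidablePred p] :
    ∀ᵐ ω ∂ν, Tendsto (fun n : ℕ =>
        (((Finset.range n).filter fun i => p (Z i ω)).card : ℝ) / n) atTop
      (𝓝 ((ν.map (Z 0) {x | p x}).toReal)) := by
  classical
  set f : S → ℝ := fun x => if p x then 1 else 0 with hf
  have hfm : Measurable f := .of_discrete
  set X : ℕ → Ω₂ → ℝ := fun i ω => f (Z i ω) with hX
  have hXind : ∀ i ω, X i ω = Set.indicator (Z i ⁻¹' {x | p x}) (fun _ => (1:ℝ)) ω := by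
    intro i ω
    simp only [hX, hf, Set.indicator_apply, Set.mem_preimage, Set.mem_setOf_eq]
  have hint : Integrable (X 0) ν := by
    have : X 0 = Set.indicator (Z 0 ⁻¹' {x | p x}) (fun _ => (1:ℝ)) := funext (hXind 0)
    rw [this]
    exact (integrable_const 1).indicator ((hZmeas 0) .of_discrete)
  have hindep : Pairwise (Function.onFun (IndepFun · · ν) X) := fun i j hij =>
    (hZindep.indepFun hij).comp hfm hfm
  have hident : ∀ i, IdentDistrib (X i) (X 0) ν ν := fun i =>
    IdentDistrib.comp ⟨(hZmeas i).aemeasurable, (hZmeas 0).aemeasurable,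
      (hZdist i).trans (hZdist 0).symm⟩ hfm
  have h := strong_law_ae_real X hint hindep hident
  have hmean : ν[X 0] = (ν.map (Z 0) {x | p x}).toReal := by
    rw [Measure.map_apply (hZmeas 0) .of_discrete]
    calc ν[X 0] = ∫ ω, Set.indicator (Z 0 ⁻¹' {x | p x}) (fun _ => (1:ℝ)) ω ∂ν := by
          exact congrArg _ (funext (hXind 0))
      _ = (ν (Z 0 ⁻¹' {x | p x})).toReal := by
          rw [integral_indicator_const (1:ℝ) ((hZmeas 0) .of_discrete)]; simp [Measure.real]
  rw [hmean] at h
  filter_upwards [h] with ω hω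
  refine hω.congr fun n => ?_
  congr 1
  rw [Finset.card_filter]
  push_cast
  refine (Finset.sum_congr rfl fun i _ => ?_).symm
  by_cases hp : p (Z i ω) <;> simp [hX, hf, hp]

lemma ratio_tendsto {a b : ℕ → ℝ} {La Lb : ℝ}
    (ha : Tendsto (fun n => a n / n) atTop (𝓝 La))
    (hb : Tendsto (fun n => b n / n) atTop (𝓝 Lb)) (hLb : 0 < Lb) :
    Tendsto (fun n => a n / b n) atTop (𝓝 (La / Lb)) := by
  have h := ha.div hb hLb.ne'
  apply h.congr'
  have hev : ∀ᶠ n : ℕ in atTop, 0 < b n / n := hb.eventually (eventually_gt_nhds hLb)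
  filter_upwards [hev] with n hn
  have hnne : (n : ℝ) ≠ 0 := by
    rintro h0
    rw [h0, div_zero] at hn
    exact lt_irrefl 0 hn
  have hbne : b n ≠ 0 := by
    rintro h0
    rw [h0, zero_div] at hn
    exact lt_irrefl 0 hn
  rw [Pi.div_apply]
  field_simp

lemma tendsto_inv_mulVec {M : ℕ → Matrix (Fin 2) (Fin 2) ℝ} {v : ℕ → Fin 2 → ℝ}
    {M0 : Matrix (Fin 2) (Fin 2) ℝ} {v0 : Fin 2 → ℝ}
    (hM : Tendsto M atTop (𝓝 M0)) (hv : Tendsto v atTop (𝓝 v0)) (hdet : IsUnit M0.det) :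
    Tendsto (fun n => (M n)⁻¹ *ᵥ v n) atTop (𝓝 (M0⁻¹ *ᵥ v0)) := by
  have hdetT : Tendsto (fun n => (M n).det) atTop (𝓝 M0.det) :=
    ((continuous_id.matrix_det).tendsto M0).comp hM
  have hadjT : Tendsto (fun n => (M n).adjugate) atTop (𝓝 M0.adjugate) :=
    ((continuous_id.matrix_adjugate).tendsto M0).comp hM
  have hinv : Tendsto (fun n => (M n)⁻¹) atTop (𝓝 M0⁻¹) := by
    simp only [Matrix.inv_def, Ring.inverse_eq_inv']
    exact (hdetT.inv₀ hdet.ne_zero).smul hadjT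
  rw [tendsto_pi_nhds]
  intro i
  have : ∀ n, ((M n)⁻¹ *ᵥ v n) i = ∑ j, (M n)⁻¹ i j * v n j := fun n => rfl
  simp only [this, Matrix.mulVec, dotProduct]
  apply tendsto_finset_sum
  intro j _
  exact ((tendsto_pi_nhds.mp (tendsto_pi_nhds.mp hinv i) j)).mul (tendsto_pi_nhds.mp hv j)

lemma isUnit_det_of_rank {m : ℕ} (B : Matrix (Fin m) Bool ℝ) (hC1 : B.rank = 2)
    (Xm : Matrix (Fin m) (Fin 2) ℝ) (hXm : Xm = B.submatrix id finTwoEquiv) :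
    IsUnit (Xmᵀ * Xm).det := by
  classical
  have hkerB : LinearMap.ker B.mulVecLin = ⊥ := by
    have h1 := LinearMap.finrank_range_add_finrank_ker B.mulVecLin
    have h2 : Module.finrank ℝ (Bool → ℝ) = 2 := by simp
    have h3 : Module.finrank ℝ (LinearMap.range B.mulVecLin) = 2 := hC1
    rw [h2, h3] at h1
    have h4 : Module.finrank ℝ (LinearMap.ker B.mulVecLin) = 0 := by omega
    exact Submodule.finrank_eq_zero.mp h4
  have hXmulVec : ∀ v : Fin 2 → ℝ, Xm *ᵥ v = B *ᵥ (v ∘ finTwoEquiv.symm) := by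
    intro v
    funext g
    rw [hXm]
    simp only [mulVec, dotProduct, submatrix_apply, id_eq, Function.comp]
    rw [← Equiv.sum_comp finTwoEquiv fun a => B g a * v (finTwoEquiv.symm a)]
    exact Finset.sum_congr rfl fun a _ => by rw [Equiv.symm_apply_apply]
  have hkerX : LinearMap.ker Xm.mulVecLin = ⊥ := by
    rw [LinearMap.ker_eq_bot']
    intro v hv
    rw [mulVecLin_apply, hXmulVec] at hv
    have h0 : B.mulVecLin (v ∘ finTwoEquiv.symm) = B.mulVecLin 0 := by
      simpa [mulVecLin_apply] using hv
    have := LinearMap.ker_eq_bot.mp hkerB h0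
    funext j
    have h2 := congrFun this (finTwoEquiv j)
    simpa using h2
  have hkerM : LinearMap.ker (Xmᵀ * Xm).mulVecLin = ⊥ := by
    rw [ker_mulVecLin_transpose_mul_self]; exact hkerX
  have hinj : Function.Injective ((Xmᵀ * Xm).mulVec) := LinearMap.ker_eq_bot.mp hkerM
  exact (Matrix.isUnit_iff_isUnit_det _).mp (mulVec_injective_iff_isUnit.mp hinj)

/-- **Consistency of the least-squares estimator** (first part of Theorem 2 on estimation).
Under Assumptions 1, 2 and Condition 1, the least-squares estimator `θ̂ₙ` computed from an
i.i.d. sample with the law of `(G, A, Y)` converges almost surely to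
`θ = (P(Y¹=1 | Y⁰=0), P(Y¹=1 | Y⁰=1))`.  (In Lean, real division by zero is `0`, so the
empirical ratios are automatically `0` when their denominators vanish, and the Mathlib
matrix inverse is `0` for singular matrices.) -/
theorem stmt3
    {Ω : Type*} [MeasurableSpace Ω] (μ : Measure Ω) [IsProbabilityMeasure μ]
    {m : ℕ} (hm : 1 ≤ m)
    (G : Ω → Fin m) (A Y0 Y1 Y : Ω → Bool)
    (hGmeas : Measurable G) (hAmeas : Measurable A)
    (hY0meas : Measurable Y0) (hY1meas : Measurable Y1)
    (hYdef : ∀ ω, Y ω = bif A ω then Y1 ω else Y0 ω)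
    -- Assumption 1
    (hA1pos : ∀ g : Fin m, 0 < μ {ω | G ω = g})
    (hA1ov : ∀ g : Fin m, 0 < condP μ {ω | A ω = true} {ω | G ω = g} ∧
        condP μ {ω | A ω = true} {ω | G ω = g} < 1)
    (hA1ind : ∀ (g : Fin m) (a y0 y1 : Bool),
      condP μ {ω | A ω = a ∧ Y0 ω = y0 ∧ Y1 ω = y1} {ω | G ω = g} =
        condP μ {ω | A ω = a} {ω | G ω = g} *
          condP μ {ω | Y0 ω = y0 ∧ Y1 ω = y1} {ω | G ω = g})
    -- Assumption 2
    (hA2pos : ∀ a : Bool, 0 < μ {ω | Y0 ω = a})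
    (hA2 : ∀ (a b : Bool) (g : Fin m), 0 < μ {ω | Y0 ω = a ∧ G ω = g} →
      condP μ {ω | Y1 ω = b} {ω | Y0 ω = a ∧ G ω = g} =
        condP μ {ω | Y1 ω = b} {ω | Y0 ω = a})
    -- Condition 1
    (hC1 : (Matrix.of fun (g : Fin m) (a : Bool) =>
      condP μ {ω | Y0 ω = a} {ω | G ω = g}).rank = 2)
    -- the target parameter θ = (π₁₍₀₎, π₁₍₁₎)
    (θ : Fin 2 → ℝ)
    (hθ : θ = ![condP μ {ω | Y1 ω = true} {ω | Y0 ω = false},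
                condP μ {ω | Y1 ω = true} {ω | Y0 ω = true}])
    -- an i.i.d. sample with the law of (G, A, Y), on some probability space (Ω₂, ν)
    {Ω₂ : Type*} [MeasurableSpace Ω₂] (ν : Measure Ω₂) [IsProbabilityMeasure ν]
    (Z : ℕ → Ω₂ → Fin m × Bool × Bool)
    (hZmeas : ∀ i, Measurable (Z i))
    (hZindep : iIndepFun Z ν)
    (hZdist : ∀ i, ν.map (Z i) = μ.map (fun ω => (G ω, A ω, Y ω)))
    -- empirical frequencies
    (Yhat : Fin m → ℕ → Ω₂ → ℝ)
    (hYhat : ∀ (g : Fin m) (n : ℕ) (ω : Ω₂), Yhat g n ω =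
      (((Finset.range n).filter (fun i => Z i ω = (g, true, true))).card : ℝ) /
      (((Finset.range n).filter (fun i => (Z i ω).1 = g ∧ (Z i ω).2.1 = true)).card : ℝ))
    (Xhat : Fin m → ℕ → Ω₂ → Fin 2 → ℝ)
    (hXhat : ∀ (g : Fin m) (n : ℕ) (ω : Ω₂), Xhat g n ω =
      ![(((Finset.range n).filter (fun i => Z i ω = (g, false, false))).card : ℝ) /
          (((Finset.range n).filter (fun i => (Z i ω).1 = g ∧ (Z i ω).2.1 = false)).card : ℝ),
        (((Finset.range n).filter (fun i => Z i ω = (g, false, true))).card : ℝ) /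
          (((Finset.range n).filter (fun i => (Z i ω).1 = g ∧ (Z i ω).2.1 = false)).card : ℝ)])
    -- the least-squares estimator
    (θhat : ℕ → Ω₂ → Fin 2 → ℝ)
    (hθhat : ∀ (n : ℕ) (ω : Ω₂), θhat n ω =
      (∑ g : Fin m, vecMulVec (Xhat g n ω) (Xhat g n ω))⁻¹ *ᵥ
        (∑ g : Fin m, Yhat g n ω • Xhat g n ω)) :
    -- conclusion: almost sure convergence θ̂ₙ → θ
    ∀ᵐ ω ∂ν, Tendsto (fun n => θhat n ω) atTop (nhds θ) := by
  classical
  -- measurability preliminaries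
  have hYmeas : Measurable Y := by
    have hYe : Y = fun ω => if A ω = true then Y1 ω else Y0 ω := by
      funext ω; rw [hYdef]; cases A ω <;> rfl
    rw [hYe]
    exact Measurable.ite (hAmeas (MeasurableSet.singleton true)) hY1meas hY0meas
  have hfm : Measurable (fun ω => (G ω, A ω, Y ω)) :=
    hGmeas.prodMk (hAmeas.prodMk hYmeas)
  have hmap : ∀ (p : Fin m × Bool × Bool → Prop),
      (ν.map (Z 0)) {x | p x} = μ {ω | p (G ω, A ω, Y ω)} := by
    intro p
    rw [hZdist 0, Measure.map_apply hfm .of_discrete]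
    rfl
  have hZdist' : ∀ i, ν.map (Z i) = ν.map (Z 0) := fun i => (hZdist i).trans (hZdist 0).symm
  have mA : ∀ a : Bool, MeasurableSet {ω | A ω = a} := fun a => hAmeas (MeasurableSet.singleton a)
  have mY0 : ∀ a : Bool, MeasurableSet {ω | Y0 ω = a} := fun a => hY0meas (MeasurableSet.singleton a)
  have mY1 : ∀ a : Bool, MeasurableSet {ω | Y1 ω = a} := fun a => hY1meas (MeasurableSet.singleton a)
  have mG : ∀ g : Fin m, MeasurableSet {ω | G ω = g} := fun g => hGmeas (MeasurableSet.singleton g)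
  have mY : ∀ a : Bool, MeasurableSet {ω | Y ω = a} := fun a => hYmeas (MeasurableSet.singleton a)
  -- split helper
  have hsplit : ∀ (s : Set Ω) (B : Ω → Bool), Measurable B →
      (μ s).toReal = (μ (s ∩ {ω | B ω = false})).toReal + (μ (s ∩ {ω | B ω = true})).toReal := by
    intro s B hB
    have h1 : s ∩ {ω | B ω = true} = s \ {ω | B ω = false} := by
      ext ω
      simp only [Set.mem_inter_iff, Set.mem_setOf_eq, Set.mem_diff]
      cases h : B ω <;> simp [h]
    rw [h1, ← ENNReal.toReal_add (measure_ne_top μ _) (measure_ne_top μ _)]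
    exact congrArg ENNReal.toReal (measure_inter_add_diff s (hB (MeasurableSet.singleton false))).symm
  -- basic real quantities
  set pg : Fin m → ℝ := fun g => (μ {ω | G ω = g}).toReal with hpgdef
  set t : Fin m → Bool → ℝ := fun g y => (μ ({ω | Y0 ω = y} ∩ {ω | G ω = g})).toReal with htdef
  set cA : Fin m → Bool → ℝ := fun g a => condP μ {ω | A ω = a} {ω | G ω = g} with hcAdef
  have hpg : ∀ g, 0 < pg g := fun g =>
    ENNReal.toReal_pos (hA1pos g).ne' (measure_ne_top μ _)
  have key : ∀ (g : Fin m) (E : Set Ω),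
      (μ (E ∩ {ω | G ω = g})).toReal = condP μ E {ω | G ω = g} * pg g := by
    intro g E
    rw [condP]
    exact (div_mul_cancel₀ _ (hpg g).ne').symm
  have hq : ∀ g y, condP μ {ω | Y0 ω = y} {ω | G ω = g} = t g y / pg g := by
    intro g y
    rw [htdef]
    simp only
    rw [key g]
    rw [mul_div_cancel_right₀ _ (hpg g).ne']
  -- denominators
  have hDen : ∀ g a, (μ {ω | G ω = g ∧ A ω = a}).toReal = cA g a * pg g := by
    intro g a
    have hset : {ω | G ω = g ∧ A ω = a} = {ω | A ω = a} ∩ {ω | G ω = g} := by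
      ext ω; simp only [Set.mem_setOf_eq, Set.mem_inter_iff]; tauto
    rw [hset, key g, hcAdef]
  have hcA1 : ∀ g, cA g false + cA g true = 1 := by
    intro g
    have h0 := hsplit {ω | G ω = g} A hAmeas
    have e1 : ∀ a : Bool, {ω | G ω = g} ∩ {ω | A ω = a} = {ω | A ω = a} ∩ {ω | G ω = g} :=
      fun a => Set.inter_comm _ _
    rw [e1 false, e1 true, key g, key g] at h0
    have h2 : pg g = cA g false * pg g + cA g true * pg g := h0
    have h3 : (cA g false + cA g true) * pg g = 1 * pg g := by
      rw [add_mul, one_mul]; linarith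
    exact mul_right_cancel₀ (hpg g).ne' h3
  have hcApos : ∀ g a, 0 < cA g a := by
    intro g a
    cases a
    · have h1 := (hA1ov g).2
      have h2 := hcA1 g
      have h3 : cA g true < 1 := h1
      linarith
    · exact (hA1ov g).1
  -- Assumption 1 consequence
  have hF1 : ∀ g (a y0 y1 : Bool),
      (μ ({ω | A ω = a ∧ Y0 ω = y0 ∧ Y1 ω = y1} ∩ {ω | G ω = g})).toReal =
        cA g a * (μ ({ω | Y0 ω = y0 ∧ Y1 ω = y1} ∩ {ω | G ω = g})).toReal := by
    intro g a y0 y1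
    have h := hA1ind g a y0 y1
    rw [key g, key g, h, hcAdef]
    ring
  -- t splits
  have htsplit : ∀ g (y : Bool), t g y =
      (μ ({ω | Y0 ω = y ∧ Y1 ω = false} ∩ {ω | G ω = g})).toReal +
      (μ ({ω | Y0 ω = y ∧ Y1 ω = true} ∩ {ω | G ω = g})).toReal := by
    intro g y
    have h := hsplit ({ω | Y0 ω = y} ∩ {ω | G ω = g}) Y1 hY1meas
    have e : ∀ y1 : Bool, ({ω | Y0 ω = y} ∩ {ω | G ω = g}) ∩ {ω | Y1 ω = y1} =
        {ω | Y0 ω = y ∧ Y1 ω = y1} ∩ {ω | G ω = g} := by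
      intro y1
      ext ω; simp only [Set.mem_inter_iff, Set.mem_setOf_eq]; tauto
    rw [e false, e true] at h
    exact h
  -- numerators, A = false
  have hNum0 : ∀ g (y : Bool), (μ {ω | G ω = g ∧ A ω = false ∧ Y ω = y}).toReal =
      cA g false * t g y := by
    intro g y
    have h := hsplit {ω | G ω = g ∧ A ω = false ∧ Y ω = y} Y1 hY1meas
    have e : ∀ y1 : Bool, {ω | G ω = g ∧ A ω = false ∧ Y ω = y} ∩ {ω | Y1 ω = y1} =
        {ω | A ω = false ∧ Y0 ω = y ∧ Y1 ω = y1} ∩ {ω | G ω = g} := by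
      intro y1
      ext ω
      have hY := hYdef ω
      simp only [Set.mem_inter_iff, Set.mem_setOf_eq]
      constructor
      · rintro ⟨⟨hg, ha, hy⟩, h1⟩
        rw [ha] at hY
        simp only [Bool.cond_false] at hY
        exact ⟨⟨ha, by rw [← hY, hy], h1⟩, hg⟩
      · rintro ⟨⟨ha, h0, h1⟩, hg⟩
        rw [ha] at hY
        simp only [Bool.cond_false] at hY
        exact ⟨⟨hg, ha, by rw [hY, h0]⟩, h1⟩
    rw [e false, e true, hF1 g false y false, hF1 g false y true] at h
    rw [h, htsplit g y]
    ring
  -- θ as bool-indexed function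
  set θv : Bool → ℝ := fun y0 => bif y0 then θ 1 else θ 0 with hθvdef
  have hθv : ∀ y0 : Bool, θv y0 = condP μ {ω | Y1 ω = true} {ω | Y0 ω = y0} := by
    intro y0
    rw [hθvdef, hθ]
    cases y0 <;> simp
  -- Assumption 2 consequence
  have hA2' : ∀ g (y0 : Bool),
      (μ ({ω | Y0 ω = y0 ∧ Y1 ω = true} ∩ {ω | G ω = g})).toReal = θv y0 * t g y0 := by
    intro g y0
    have hU : {ω | Y0 ω = y0 ∧ G ω = g} = {ω | Y0 ω = y0} ∩ {ω | G ω = g} := by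
      ext ω; simp only [Set.mem_setOf_eq, Set.mem_inter_iff]
    have h2 : t g y0 = (μ {ω | Y0 ω = y0 ∧ G ω = g}).toReal := by
      rw [htdef]; simp only; rw [← hU]
    by_cases hU0 : μ {ω | Y0 ω = y0 ∧ G ω = g} = 0
    · have hsub : {ω | Y0 ω = y0 ∧ Y1 ω = true} ∩ {ω | G ω = g} ⊆ {ω | Y0 ω = y0 ∧ G ω = g} := by
        intro ω hω
        simp only [Set.mem_inter_iff, Set.mem_setOf_eq] at hω ⊢
        tauto
      have h1 : μ ({ω | Y0 ω = y0 ∧ Y1 ω = true} ∩ {ω | G ω = g}) = 0 :=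
        le_antisymm (le_trans (measure_mono hsub) (le_of_eq hU0)) zero_le
      rw [h1, ENNReal.toReal_zero, h2, hU0, ENNReal.toReal_zero, mul_zero]
    · have hpos : 0 < μ {ω | Y0 ω = y0 ∧ G ω = g} := pos_iff_ne_zero.mpr hU0
      have h := hA2 y0 true g hpos
      rw [← hθv y0] at h
      have hset : {ω | Y1 ω = true} ∩ {ω | Y0 ω = y0 ∧ G ω = g} =
          {ω | Y0 ω = y0 ∧ Y1 ω = true} ∩ {ω | G ω = g} := by
        ext ω; simp only [Set.mem_inter_iff, Set.mem_setOf_eq]; tauto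
      have htpos : (0:ℝ) < (μ {ω | Y0 ω = y0 ∧ G ω = g}).toReal :=
        ENNReal.toReal_pos hU0 (measure_ne_top μ _)
      rw [condP, hset] at h
      rw [h2, ← h]
      field_simp
  -- numerator, A = true
  have hNum1 : ∀ g, (μ {ω | G ω = g ∧ A ω = true ∧ Y ω = true}).toReal =
      cA g true * (θv false * t g false + θv true * t g true) := by
    intro g
    have h := hsplit {ω | G ω = g ∧ A ω = true ∧ Y ω = true} Y0 hY0meas
    have e : ∀ y0 : Bool, {ω | G ω = g ∧ A ω = true ∧ Y ω = true} ∩ {ω | Y0 ω = y0} =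
        {ω | A ω = true ∧ Y0 ω = y0 ∧ Y1 ω = true} ∩ {ω | G ω = g} := by
      intro y0
      ext ω
      have hY := hYdef ω
      simp only [Set.mem_inter_iff, Set.mem_setOf_eq]
      constructor
      · rintro ⟨⟨hg, ha, hy⟩, h0⟩
        rw [ha] at hY
        simp only [Bool.cond_true] at hY
        exact ⟨⟨ha, h0, by rw [← hY, hy]⟩, hg⟩
      · rintro ⟨⟨ha, h0, h1⟩, hg⟩
        rw [ha] at hY
        simp only [Bool.cond_true] at hY
        exact ⟨⟨hg, ha, by rw [hY, h1]⟩, h0⟩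
    rw [e false, e true, hF1 g true false true, hF1 g true true true,
      hA2' g false, hA2' g true] at h
    rw [h]
    ring
  -- frequency limits
  have hfreq : ∀ (p : Fin m × Bool × Bool → Prop) (_ : DecidablePred p),
      ∀ᵐ ω ∂ν, Tendsto (fun n : ℕ =>
        (((Finset.range n).filter fun i => p (Z i ω)).card : ℝ) / n) atTop
        (𝓝 ((μ {ω' | p (G ω', A ω', Y ω')}).toReal)) := by
    intro p hp
    have h := freq_tendsto Z hZmeas hZindep hZdist' p
    rw [hmap p] at h
    exact h
  have Hae : ∀ᵐ ω ∂ν, ∀ g : Fin m,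
      Tendsto (fun n : ℕ =>
          (((Finset.range n).filter fun i => Z i ω = (g, true, true)).card : ℝ) / n) atTop
        (𝓝 ((μ {ω' | G ω' = g ∧ A ω' = true ∧ Y ω' = true}).toReal)) ∧
      Tendsto (fun n : ℕ =>
          (((Finset.range n).filter fun i => Z i ω = (g, false, false)).card : ℝ) / n) atTop
        (𝓝 ((μ {ω' | G ω' = g ∧ A ω' = false ∧ Y ω' = false}).toReal)) ∧
      Tendsto (fun n : ℕ =>
          (((Finset.range n).filter fun i => Z i ω = (g, false, true)).card : ℝ) / n) atTop
        (𝓝 ((μ {ω' | G ω' = g ∧ A ω' = false ∧ Y ω' = true}).toReal)) ∧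
      Tendsto (fun n : ℕ =>
          (((Finset.range n).filter fun i => (Z i ω).1 = g ∧ (Z i ω).2.1 = true).card : ℝ) / n)
        atTop (𝓝 ((μ {ω' | G ω' = g ∧ A ω' = true}).toReal)) ∧
      Tendsto (fun n : ℕ =>
          (((Finset.range n).filter fun i => (Z i ω).1 = g ∧ (Z i ω).2.1 = false).card : ℝ) / n)
        atTop (𝓝 ((μ {ω' | G ω' = g ∧ A ω' = false}).toReal)) := by
    rw [ae_all_iff]
    intro g
    have e1 : ∀ a y : Bool, {ω' | (G ω', A ω', Y ω') = (g, a, y)} =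
        {ω' | G ω' = g ∧ A ω' = a ∧ Y ω' = y} := by
      intro a y; ext ω'; simp [Prod.ext_iff]
    filter_upwards [hfreq (fun x => x = (g, true, true)) (by infer_instance),
      hfreq (fun x => x = (g, false, false)) (by infer_instance),
      hfreq (fun x => x = (g, false, true)) (by infer_instance),
      hfreq (fun x => x.1 = g ∧ x.2.1 = true) (by infer_instance),
      hfreq (fun x => x.1 = g ∧ x.2.1 = false) (by infer_instance)] with ω h1 h2 h3 h4 h5
    rw [e1 true true] at h1
    rw [e1 false false] at h2
    rw [e1 false true] at h3
    exact ⟨h1, h2, h3, h4, h5⟩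
  -- pointwise assembly
  filter_upwards [Hae] with ω hω
  have hDposf : ∀ g, (0:ℝ) < (μ {ω' | G ω' = g ∧ A ω' = false}).toReal := by
    intro g
    rw [hDen g false]
    exact mul_pos (hcApos g false) (hpg g)
  have hDpost : ∀ g, (0:ℝ) < (μ {ω' | G ω' = g ∧ A ω' = true}).toReal := by
    intro g
    rw [hDen g true]
    exact mul_pos (hcApos g true) (hpg g)
  set Lx : Fin m → Fin 2 → ℝ := fun g j => t g (finTwoEquiv j) / pg g with hLxdef
  have hfe0 : finTwoEquiv (0 : Fin 2) = false := rfl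
  have hfe1 : finTwoEquiv (1 : Fin 2) = true := rfl
  have hXcomp : ∀ g (j : Fin 2), Tendsto (fun n => Xhat g n ω j) atTop (𝓝 (Lx g j)) := by
    intro g j
    obtain ⟨h1, h2, h3, h4, h5⟩ := hω g
    fin_cases j
    · have h := ratio_tendsto h2 h5 (hDposf g)
      have hlim : (μ {ω' | G ω' = g ∧ A ω' = false ∧ Y ω' = false}).toReal /
          (μ {ω' | G ω' = g ∧ A ω' = false}).toReal = t g false / pg g := by
        rw [hNum0 g false, hDen g false, mul_div_mul_left _ _ (hcApos g false).ne']
      rw [hlim] at h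
      refine h.congr fun n => ?_
      rw [hXhat g n ω]
      simp
    · have h := ratio_tendsto h3 h5 (hDposf g)
      have hlim : (μ {ω' | G ω' = g ∧ A ω' = false ∧ Y ω' = true}).toReal /
          (μ {ω' | G ω' = g ∧ A ω' = false}).toReal = t g true / pg g := by
        rw [hNum0 g true, hDen g false, mul_div_mul_left _ _ (hcApos g false).ne']
      rw [hlim] at h
      refine h.congr fun n => ?_
      rw [hXhat g n ω]
      simp
  have hYcomp : ∀ g, Tendsto (fun n => Yhat g n ω) atTop
      (𝓝 (θv false * Lx g 0 + θv true * Lx g 1)) := by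
    intro g
    obtain ⟨h1, h2, h3, h4, h5⟩ := hω g
    have h := ratio_tendsto h1 h4 (hDpost g)
    have hlim : (μ {ω' | G ω' = g ∧ A ω' = true ∧ Y ω' = true}).toReal /
        (μ {ω' | G ω' = g ∧ A ω' = true}).toReal =
        θv false * Lx g 0 + θv true * Lx g 1 := by
      rw [hNum1 g, hDen g true, mul_div_mul_left _ _ (hcApos g true).ne', hLxdef]
      simp only [hfe0, hfe1]
      ring
    rw [hlim] at h
    refine h.congr fun n => ?_
    rw [hYhat g n ω]
  -- the limit matrix is invertible
  have hM2det : IsUnit (∑ g : Fin m, vecMulVec (Lx g) (Lx g)).det := by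
    have hiso := isUnit_det_of_rank _ hC1
      ((Matrix.of fun (g : Fin m) (a : Bool) =>
        condP μ {ω | Y0 ω = a} {ω | G ω = g}).submatrix id finTwoEquiv) rfl
    have hM2 : (∑ g : Fin m, vecMulVec (Lx g) (Lx g)) =
        ((Matrix.of fun (g : Fin m) (a : Bool) =>
          condP μ {ω | Y0 ω = a} {ω | G ω = g}).submatrix id finTwoEquiv)ᵀ *
        ((Matrix.of fun (g : Fin m) (a : Bool) =>
          condP μ {ω | Y0 ω = a} {ω | G ω = g}).submatrix id finTwoEquiv) := by
      ext i j
      rw [Matrix.mul_apply]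
      simp only [Matrix.sum_apply, vecMulVec_apply, transpose_apply, submatrix_apply,
        Matrix.of_apply, id_eq]
      exact Finset.sum_congr rfl fun g _ => by rw [hq, hq]
    rw [hM2]
    exact hiso
  -- convergence of the matrix and vector parts
  have hMn : Tendsto (fun n => ∑ g : Fin m, vecMulVec (Xhat g n ω) (Xhat g n ω)) atTop
      (𝓝 (∑ g : Fin m, vecMulVec (Lx g) (Lx g))) := by
    apply tendsto_pi_nhds.mpr
    intro i
    rw [tendsto_pi_nhds]
    intro j
    simp only [Matrix.sum_apply, vecMulVec_apply]
    exact tendsto_finset_sum _ fun g _ => (hXcomp g i).mul (hXcomp g j)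
  have valg : (∑ g : Fin m, (θv false * Lx g 0 + θv true * Lx g 1) • Lx g) =
      (∑ g : Fin m, vecMulVec (Lx g) (Lx g)) *ᵥ θ := by
    funext j
    simp only [Finset.sum_apply, Pi.smul_apply, smul_eq_mul, Matrix.mulVec, dotProduct,
      Matrix.sum_apply, vecMulVec_apply]
    rw [Fin.sum_univ_two, Finset.sum_mul, Finset.sum_mul, ← Finset.sum_add_distrib]
    refine Finset.sum_congr rfl fun g _ => ?_
    have hv0 : θv false = θ 0 := rfl
    have hv1 : θv true = θ 1 := rfl
    rw [hv0, hv1]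
    ring
  have hvn : Tendsto (fun n => ∑ g : Fin m, Yhat g n ω • Xhat g n ω) atTop
      (𝓝 ((∑ g : Fin m, vecMulVec (Lx g) (Lx g)) *ᵥ θ)) := by
    rw [← valg, tendsto_pi_nhds]
    intro j
    simp only [Finset.sum_apply, Pi.smul_apply, smul_eq_mul]
    exact tendsto_finset_sum _ fun g _ => (hYcomp g).mul (hXcomp g j)
  have hmain := tendsto_inv_mulVec hMn hvn hM2det
  have hfinal : (∑ g : Fin m, vecMulVec (Lx g) (Lx g))⁻¹ *ᵥ
      ((∑ g : Fin m, vecMulVec (Lx g) (Lx g)) *ᵥ θ) = θ := by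
    rw [mulVec_mulVec, nonsing_inv_mul _ hM2det, one_mulVec]
  rw [hfinal] at hmain
  exact hmain.congr fun n => (hθhat n ω).symm
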